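/- Define f(i) = log(2k(k+1)/((2k+3−2i)(k+1−i))) / log(k(k+1)/(k+1−i)²) for real i ∈ [1,k]. At any critical point of f (where f′(i)=0), f(i) = (4k+5−4i)/(2(2k+3−2i)). Consequently max_{i∈[1,k]} f(i) ≤ (4k+1)/(4k+2). -/

import Mathlib

private lemma aux_deriv (c : ℝ) : ∀ x : ℝ, 0 < x →
    HasDerivAt (fun x : ℝ => (c + 2) * Real.log (2 * x + 1) - c * Real.log x)
      ((c + 2) * (2 / (2 * x + 1)) - c * x⁻¹) x := by
  intro x hx
  have h1 : HasDerivAt (fun x : ℝ => 2 * x + 1) 2 x := by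
    simpa using ((hasDerivAt_id x).const_mul (2 : ℝ)).add_const 1
  have h2 := (h1.log (by positivity)).const_mul (c + 2)
  have h3 := (Real.hasDerivAt_log hx.ne').const_mul c
  exact h2.sub h3

private lemma aux_mono (k : ℕ) (hk : 2 ≤ k) :
    AntitoneOn (fun x : ℝ => (4 * (k : ℝ) + 2) * Real.log (2 * x + 1)
      - 4 * (k : ℝ) * Real.log x) (Set.Icc 1 (k : ℝ)) := by
  have hk1 : (1 : ℝ) ≤ k := by exact_mod_cast Nat.one_le_of_lt hk
  have hder := aux_deriv (4 * (k : ℝ))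
  apply antitoneOn_of_deriv_nonpos (convex_Icc _ _)
  · intro x hx
    have hx0 : (0 : ℝ) < x := lt_of_lt_of_le one_pos hx.1
    exact (hder x hx0).continuousAt.continuousWithinAt
  · intro x hx
    rw [interior_Icc] at hx
    have hx0 : (0 : ℝ) < x := lt_trans one_pos hx.1
    exact (hder x hx0).differentiableAt.differentiableWithinAt
  · intro x hx
    rw [interior_Icc] at hx
    have hx0 : (0 : ℝ) < x := lt_trans one_pos hx.1
    rw [(hder x hx0).deriv]
    have e1 : (4 * (k : ℝ) + 2) * (2 / (2 * x + 1)) = (8 * k + 4) / (2 * x + 1) := by ring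
    have e2 : 4 * (k : ℝ) * x⁻¹ = (4 * k) / x := by ring
    rw [e1, e2, sub_nonpos, div_le_div_iff₀ (by positivity) hx0]
    nlinarith [hx.2, hx0]

private lemma aux_key (k : ℕ) (hk : 2 ≤ k) :
    (2 : ℝ) ^ (4 * k + 2) * (k : ℝ) ^ (4 * k + 1) * ((k : ℝ) + 1)
      ≤ (2 * (k : ℝ) + 1) ^ (4 * k + 2) := by
  have hK : (2 : ℝ) ≤ k := by exact_mod_cast hk
  have h1 : (2 : ℝ) ^ (4 * k + 2) * (k : ℝ) ^ (4 * k + 1) * ((k : ℝ) + 1)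
      = (2 * (k : ℝ)) ^ (4 * k) * ((2 * k) * (2 * k + 2)) := by
    rw [mul_pow, pow_add, pow_add]; ring
  have h2 : (2 * (k : ℝ)) ^ (4 * k) * ((2 * (k : ℝ)) * (2 * (k : ℝ) + 2))
      ≤ (2 * (k : ℝ)) ^ (4 * k) * (2 * (k : ℝ) + 1) ^ 2 := by
    apply mul_le_mul_of_nonneg_left _ (by positivity)
    nlinarith
  have h3 : (2 * (k : ℝ)) ^ (4 * k) * (2 * (k : ℝ) + 1) ^ 2
      ≤ (2 * (k : ℝ) + 1) ^ (4 * k) * (2 * (k : ℝ) + 1) ^ 2 :=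
    mul_le_mul_of_nonneg_right (pow_le_pow_left₀ (by positivity) (by linarith) _) (by positivity)
  have h4 : (2 * (k : ℝ) + 1) ^ (4 * k) * (2 * (k : ℝ) + 1) ^ 2
      = (2 * (k : ℝ) + 1) ^ (4 * k + 2) := (pow_add _ _ _).symm
  linarith [h1, h2, h3, h4]

private lemma aux_logkey (k : ℕ) (hk : 2 ≤ k) :
    (4 * (k : ℝ) + 2) * Real.log 2 + Real.log k + Real.log ((k : ℝ) + 1)
      ≤ (4 * (k : ℝ) + 2) * Real.log (2 * (k : ℝ) + 1) - 4 * (k : ℝ) * Real.log k := by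
  have hK : (2 : ℝ) ≤ k := by exact_mod_cast hk
  have hkpos : (0 : ℝ) < k := by linarith
  have h := Real.log_le_log (by positivity) (aux_key k hk)
  rw [Real.log_mul (by positivity) (by positivity), Real.log_mul (by positivity) (by positivity),
    Real.log_pow, Real.log_pow, Real.log_pow] at h
  push_cast at h
  linarith

theorem critical_point_value (k : ℕ) (hk : 2 ≤ k) (f : ℝ → ℝ)
    (hf : ∀ i : ℝ, f i =
      Real.log (2 * (k : ℝ) * (k + 1) / ((2 * (k : ℝ) + 3 - 2 * i) * ((k : ℝ) + 1 - i))) /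
      Real.log ((k : ℝ) * (k + 1) / ((k : ℝ) + 1 - i) ^ 2)) :
    (∀ i ∈ Set.Icc (1 : ℝ) (k : ℝ), deriv f i = 0 →
      f i = (4 * (k : ℝ) + 5 - 4 * i) / (2 * (2 * (k : ℝ) + 3 - 2 * i))) ∧
    (∀ i ∈ Set.Icc (1 : ℝ) (k : ℝ), f i ≤ (4 * (k : ℝ) + 1) / (4 * (k : ℝ) + 2)) := by
  have hK : (2 : ℝ) ≤ k := by exact_mod_cast hk
  have hkpos : (0 : ℝ) < k := by linarith
  -- positivity of the denominator log
  have hDpos : ∀ i : ℝ, 1 ≤ i → i ≤ k →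
      0 < Real.log ((k : ℝ) * ((k : ℝ) + 1)) - 2 * Real.log ((k : ℝ) + 1 - i) := by
    intro i hi1 hik
    have hb : (0 : ℝ) < (k : ℝ) + 1 - i := by linarith
    have hbk : (k : ℝ) + 1 - i ≤ k := by linarith
    have h1 : Real.log (((k : ℝ) + 1 - i) ^ 2) ≤ Real.log ((k : ℝ) ^ 2) :=
      Real.log_le_log (by positivity) (by nlinarith)
    have h2 : Real.log ((k : ℝ) ^ 2) < Real.log ((k : ℝ) * ((k : ℝ) + 1)) :=
      Real.log_lt_log (by positivity) (by nlinarith)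
    rw [Real.log_pow] at h1
    push_cast at h1
    linarith
  -- pointwise expansion of f
  have hfi : ∀ i : ℝ, i < (k : ℝ) + 1 →
      f i = (Real.log (2 * (k : ℝ) * ((k : ℝ) + 1)) - Real.log (2 * (k : ℝ) + 3 - 2 * i)
              - Real.log ((k : ℝ) + 1 - i)) /
            (Real.log ((k : ℝ) * ((k : ℝ) + 1)) - 2 * Real.log ((k : ℝ) + 1 - i)) := by
    intro i hi
    have hb : (0 : ℝ) < (k : ℝ) + 1 - i := by linarith
    have hc : (0 : ℝ) < 2 * (k : ℝ) + 3 - 2 * i := by linarith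
    rw [hf i, Real.log_div (by positivity) (by positivity),
      Real.log_div (by positivity) (by positivity),
      Real.log_mul hc.ne' hb.ne', Real.log_pow]
    push_cast
    ring_nf
  constructor
  · -- critical point value
    intro i hi hd
    obtain ⟨hi1, hik⟩ := hi
    have hb : (0 : ℝ) < (k : ℝ) + 1 - i := by linarith
    have hc : (0 : ℝ) < 2 * (k : ℝ) + 3 - 2 * i := by linarith
    have hD := hDpos i hi1 hik
    have heq : f =ᶠ[nhds i] fun x =>
        (Real.log (2 * (k : ℝ) * ((k : ℝ) + 1)) - Real.log (2 * (k : ℝ) + 3 - 2 * x)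
          - Real.log ((k : ℝ) + 1 - x)) /
        (Real.log ((k : ℝ) * ((k : ℝ) + 1)) - 2 * Real.log ((k : ℝ) + 1 - x)) := by
      have h1 : ∀ᶠ x in nhds i, x < (k : ℝ) + 1 := eventually_lt_nhds (by linarith)
      filter_upwards [h1] with x hx
      exact hfi x hx
    -- derivatives
    have hg2 : HasDerivAt (fun x : ℝ => (k : ℝ) + 1 - x) (-1) i := by
      simpa using (hasDerivAt_id i).const_sub ((k : ℝ) + 1)
    have hg1 : HasDerivAt (fun x : ℝ => 2 * (k : ℝ) + 3 - 2 * x) (-2) i := by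
      simpa using ((hasDerivAt_id i).const_mul (2 : ℝ)).const_sub (2 * (k : ℝ) + 3)
    have hN : HasDerivAt (fun x : ℝ =>
        Real.log (2 * (k : ℝ) * ((k : ℝ) + 1)) - Real.log (2 * (k : ℝ) + 3 - 2 * x)
          - Real.log ((k : ℝ) + 1 - x))
        (2 / (2 * (k : ℝ) + 3 - 2 * i) + 1 / ((k : ℝ) + 1 - i)) i := by
      have := ((hasDerivAt_const i (Real.log (2 * (k : ℝ) * ((k : ℝ) + 1)))).sub
        (hg1.log hc.ne')).sub (hg2.log hb.ne')
      refine this.congr_deriv ?_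
      ring
    have hDd : HasDerivAt (fun x : ℝ =>
        Real.log ((k : ℝ) * ((k : ℝ) + 1)) - 2 * Real.log ((k : ℝ) + 1 - x))
        (2 / ((k : ℝ) + 1 - i)) i := by
      have := (hasDerivAt_const i (Real.log ((k : ℝ) * ((k : ℝ) + 1)))).sub
        ((hg2.log hb.ne').const_mul (2 : ℝ))
      refine this.congr_deriv ?_
      ring
    have hq := hN.div hDd hD.ne'
    simp only [Pi.div_def] at hq
    rw [heq.deriv_eq, hq.deriv] at hd
    rw [div_eq_zero_iff] at hd
    have hnum : (2 / (2 * (k : ℝ) + 3 - 2 * i) + 1 / ((k : ℝ) + 1 - i)) *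
        (Real.log ((k : ℝ) * ((k : ℝ) + 1)) - 2 * Real.log ((k : ℝ) + 1 - i)) -
        (Real.log (2 * (k : ℝ) * ((k : ℝ) + 1)) - Real.log (2 * (k : ℝ) + 3 - 2 * i)
          - Real.log ((k : ℝ) + 1 - i)) * (2 / ((k : ℝ) + 1 - i)) = 0 := by
      rcases hd with h | h
      · exact h
      · exact absurd h (pow_ne_zero 2 hD.ne')
    rw [hfi i (by linarith), div_eq_div_iff hD.ne' (by positivity)]
    have h2 : (2 / (2 * (k : ℝ) + 3 - 2 * i) + 1 / ((k : ℝ) + 1 - i)) *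
        (2 * (2 * (k : ℝ) + 3 - 2 * i)) * ((k : ℝ) + 1 - i) =
        (4 * (k : ℝ) + 5 - 4 * i) * 2 := by
      field_simp
      ring
    -- from hnum: N * (2/b) = N' * D ; multiply both sides appropriately
    field_simp at hnum
    nlinarith [hnum, hD, hb, hc]
  · -- upper bound
    intro i hi
    obtain ⟨hi1, hik⟩ := hi
    have hb : (0 : ℝ) < (k : ℝ) + 1 - i := by linarith
    have hb1 : (1 : ℝ) ≤ (k : ℝ) + 1 - i := by linarith
    have hbk : (k : ℝ) + 1 - i ≤ k := by linarith
    have hc : (0 : ℝ) < 2 * (k : ℝ) + 3 - 2 * i := by linarith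
    have hD := hDpos i hi1 hik
    rw [hfi i (by linarith), div_le_div_iff₀ hD (by positivity)]
    -- expand the logs
    have e1 : Real.log (2 * (k : ℝ) * ((k : ℝ) + 1)) =
        Real.log 2 + Real.log k + Real.log ((k : ℝ) + 1) := by
      rw [Real.log_mul (by positivity) (by positivity),
        Real.log_mul (by positivity) (by positivity)]
    have e2 : Real.log ((k : ℝ) * ((k : ℝ) + 1)) = Real.log k + Real.log ((k : ℝ) + 1) :=
      Real.log_mul (by positivity) (by positivity)
    have e3 : Real.log (2 * (k : ℝ) + 3 - 2 * i) = Real.log (2 * ((k : ℝ) + 1 - i) + 1) := by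
      ring_nf
    -- monotonicity of the key function
    have hmono := aux_mono k hk ⟨hb1, hbk⟩ ⟨by exact_mod_cast Nat.one_le_of_lt hk, le_refl _⟩ hbk
    simp only at hmono
    have hlk := aux_logkey k hk
    rw [e1, e2, e3]
    linarith [hmono, hlk]
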